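/- The amplitude damping channel with Kraus operators K₁ = diag(1, √(1−p)), K₂ = [[0, √p],[0, 0]] is selfcomplementary if and only if p = 1/2; in that case it coincides (up to a relabeling) with the θ = π/2, φ = 0 member of the family K₁ = diag(sinθ, 1/√2), K₂ = [[0,1/√2],[cosθ e^{iφ},0]] (second family form K₁ = diag(1, 1/√2), K₂ = [[0,1/√2],[0,0]]). -/
import Mathlib


open Matrix

noncomputable section

/-- Amplitude damping Kraus operator `K₁ = diag(1, √(1−p))`. -/
def AD1 (p : ℝ) : Matrix (Fin 2) (Fin 2) ℂ :=
  !![1, 0; 0, (Real.sqrt (1 - p) : ℂ)]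

/-- Amplitude damping Kraus operator `K₂ = [[0, √p],[0, 0]]`. -/
def AD2 (p : ℝ) : Matrix (Fin 2) (Fin 2) ℂ :=
  !![0, (Real.sqrt p : ℂ); 0, 0]

/-- Selfcomplementarity of a two-Kraus qubit family: the index symmetry
`K^i_{αj} = K^α_{ij}`, where `K 0 = K₁`, `K 1 = K₂`. -/
def SelfComp (K1 K2 : Matrix (Fin 2) (Fin 2) ℂ) : Prop :=
  ∀ (i α j : Fin 2),
    (if i = 0 then K1 else K2) α j = (if α = 0 then K1 else K2) i j

/-- The amplitude damping channel is selfcomplementary iff `p = 1/2`, in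
which case it coincides with the `θ = π/2, φ = 0` member of the family:
`K₁ = diag(1, 1/√2)`, `K₂ = [[0, 1/√2],[0, 0]]`. -/
theorem amplitude_damping_selfcomplementary (p : ℝ) (hp : p ∈ Set.Icc (0 : ℝ) 1) :
    (SelfComp (AD1 p) (AD2 p) ↔ p = 1 / 2) ∧
    (p = 1 / 2 →
      AD1 p = !![1, 0; 0, (((Real.sqrt 2)⁻¹ : ℝ) : ℂ)] ∧
      AD2 p = !![0, (((Real.sqrt 2)⁻¹ : ℝ) : ℂ); 0, 0]) := by
  obtain ⟨hp0, hp1⟩ := hp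
  have hsqrt : p = 1/2 → Real.sqrt p = (Real.sqrt 2)⁻¹ := by
    rintro rfl
    rw [one_div, Real.sqrt_inv]
  constructor
  · constructor
    · intro h
      have := h 0 1 1
      simp [AD1, AD2] at this
      have h2 : Real.sqrt (1 - p) = Real.sqrt p := by exact_mod_cast this
      have : 1 - p = p := by
        have a := Real.sq_sqrt (show (0:ℝ) ≤ 1-p by linarith)
        have b := Real.sq_sqrt hp0
        rw [h2] at a; linarith
      linarith
    · rintro rfl
      intro i α j
      fin_cases i <;> fin_cases α <;> fin_cases j <;>
        norm_num [AD1, AD2]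
  · intro hp2
    have hs := hsqrt hp2
    subst hp2
    constructor
    · simp [AD1]
      norm_num [hs]
    · simp [AD2, hs]

end
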